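/- arXiv:1904.00079 — 2 statements merged into one kernel-verified Lean document; each statement's English description precedes it below -/
import Mathlib

section
/- Assume T is binary and let k be a positive integer. Define tables over extended reals, for u ∈ V, 0 ≤ κ ≤ k, and v ∈ anc(u) ∪ {ε}: A(u, 0, v) = 0; if u is a leaf, A⁰(u, κ, v) = 0 and A¹(u, κ, v) = −∞ for κ ≥ 1; if u is internal and κ ≥ 1, A¹(u, κ, v) = E[I(u|{v})]·U(u) + max over κ_ℓ + κ_r = κ − 1 of (A(ℓ(u), κ_ℓ, u) + A(r(u), κ_r, u)) and A⁰(u, κ, v) = max over κ_ℓ + κ_r = κ of (A(ℓ(u), κ_ℓ, v) + A(r(u), κ_r, v)); and A(u, κ, v) = max{A¹(u, κ, v), A⁰(u, κ, v)} for κ ≥ 1, where E[I(u|{ε})] := E[I(u|∅)]. Then A(r, k, ε) equals the maximum of B(R) over all sets R ⊆ V containing no leaf of T with |R| ≤ k; i.e., the dynamic program computes the optimal benefit. -/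
open scoped Classical

section TreeDefs

variable {V : Type*}

/-- The set of strict ancestors of `u` in the rooted tree given by `parent`. -/
def ancSet (parent : V → V) (u : V) : Set V :=
  {v | v ≠ u ∧ ∃ n : ℕ, parent^[n] u = v}

/-- The set of nodes of the subtree rooted at `u` (including `u`). -/
def subtreeSet (parent : V → V) (u : V) : Set V :=
  {x | ∃ n : ℕ, parent^[n] x = u}

/-- The set of nodes strictly between `u` and its ancestor `v`. -/
def pathSet (parent : V → V) (u v : V) : Set V :=
  {w | w ∈ ancSet parent u ∧ v ∈ ancSet parent w}

/-- A node is internal if it has at least one child. -/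
def isInternal (parent : V → V) (u : V) : Prop :=
  ∃ w, w ≠ u ∧ parent w = u

/-- `T` is binary with left-child map `lc` and right-child map `rc`. -/
def isBinary (parent lc rc : V → V) : Prop :=
  ∀ u, isInternal parent u →
    lc u ≠ rc u ∧ parent (lc u) = u ∧ parent (rc u) = u ∧
    lc u ≠ u ∧ rc u ≠ u ∧
    ∀ w, w ≠ u → parent w = u → w = lc u ∨ w = rc u

/-- The usefulness indicator `I_q(u|R)` of node `u` for a query with
summed-out variables `Zq`, with respect to the materialized set `R`. -/
noncomputable def useful {α : Type*} (parent : V → V) (vars : V → Set α)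
    (Zq : Set α) (u : V) (R : Set V) : ℝ :=
  if vars u ⊆ Zq ∧ ∀ v ∈ ancSet parent u ∩ R, ¬ vars v ⊆ Zq then 1 else 0

/-- The expected usefulness `E[I(u|R)]` over the query distribution. -/
noncomputable def eInd {α Q : Type*} [Fintype Q] (parent : V → V) (vars : V → Set α)
    (Z : Q → Set α) (Pr : Q → ℝ) (u : V) (R : Set V) : ℝ :=
  ∑ q : Q, Pr q * useful parent vars (Z q) u R

/-- The utility `U(u) = Σ_{x ∈ subtree(u)} c(x)`. -/
noncomputable def util [Fintype V] (parent : V → V) (c : V → ℝ) (u : V) : ℝ :=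
  ∑ x ∈ Finset.univ.filter (fun x => x ∈ subtreeSet parent u), c x

/-- The benefit `B(R) = Σ_{u ∈ R} E[I(u|R)] · U(u)`. -/
noncomputable def benefit [Fintype V] {α Q : Type*} [Fintype Q]
    (parent : V → V) (vars : V → Set α) (Z : Q → Set α) (Pr : Q → ℝ)
    (c : V → ℝ) (R : Finset V) : ℝ :=
  ∑ u ∈ R, eInd parent vars Z Pr u (↑R) * util parent c u

/-- The partial benefit `pB_u(R) = Σ_{w ∈ R ∩ subtree(u)} E[I(w|R)] · U(w)`. -/
noncomputable def pB [Fintype V] {α Q : Type*} [Fintype Q]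
    (parent : V → V) (vars : V → Set α) (Z : Q → Set α) (Pr : Q → ℝ)
    (c : V → ℝ) (u : V) (R : Finset V) : ℝ :=
  ∑ w ∈ R.filter (fun w => w ∈ subtreeSet parent u),
    eInd parent vars Z Pr w (↑R) * util parent c w

end TreeDefs

/-- The set `{v}` for `vo = some v`, and `∅` for `vo = ε = none`. -/
def optSet {V : Type*} (vo : Option V) : Set V := vo.elim ∅ (fun v => {v})
section Helpers

variable {V : Type*} {parent : V → V} {root : V}

lemma iter_root (hroot : parent root = root) (n : ℕ) : parent^[n] root = root :=
  Function.iterate_fixed hroot n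

lemma iter_sub {a b : ℕ} (h : a ≤ b) {z x : V} (ha : parent^[a] z = x) :
    parent^[b] z = parent^[b - a] x := by
  rw [← ha, ← Function.iterate_add_apply]
  congr 1
  omega

lemma cycle_root (hroot : parent root = root)
    (hreach : ∀ u, ∃ n : ℕ, parent^[n] u = root)
    {u : V} {n : ℕ} (hn : 1 ≤ n) (h : parent^[n] u = u) : u = root := by
  obtain ⟨m, hm⟩ := hreach u
  have key : ∀ k : ℕ, parent^[k * n] u = u := by
    intro k
    induction k with
    | zero => simp
    | succ k ihk =>
        have he : (k + 1) * n = n + k * n := by ring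
        rw [he, Function.iterate_add_apply, ihk]
        exact h
  have hmn : m ≤ m * n := Nat.le_mul_of_pos_right m hn
  have hthis : parent^[m * n] u = parent^[m * n - m] (parent^[m] u) := by
    rw [← Function.iterate_add_apply]
    congr 1
    omega
  rw [key m, hm, iter_root hroot] at hthis
  exact hthis

lemma mem_subtree_self (u : V) : u ∈ subtreeSet parent u := ⟨0, rfl⟩

lemma subtree_mono {x u w : V} (hw : w ∈ subtreeSet parent x) (hx : x ∈ subtreeSet parent u) :
    w ∈ subtreeSet parent u := by
  obtain ⟨a, ha⟩ := hw; obtain ⟨b, hb⟩ := hx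
  exact ⟨b + a, by rw [Function.iterate_add_apply, ha, hb]⟩

lemma child_mem_subtree {x u : V} (h : parent x = u) : x ∈ subtreeSet parent u :=
  ⟨1, by simpa using h⟩

lemma not_mem_subtree_child (hroot : parent root = root)
    (hreach : ∀ u, ∃ n : ℕ, parent^[n] u = root)
    {u x : V} (hpx : parent x = u) (hxu : x ≠ u) :
    u ∉ subtreeSet parent x := by
  rintro ⟨n, hn⟩
  have hcyc : parent^[n + 1] u = u := by
    rw [Function.iterate_succ_apply', hn, hpx]
  have hu : u = root := cycle_root hroot hreach (by omega) hcyc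
  subst hu
  rw [iter_root hroot] at hn
  exact hxu hn.symm

lemma sibling_disjoint_aux (hroot : parent root = root)
    (hreach : ∀ u, ∃ n : ℕ, parent^[n] u = root)
    {u x y z : V} (hpx : parent x = u) (hpy : parent y = u)
    (hxy : x ≠ y) (hyu : y ≠ u) {a b : ℕ} (hab : a ≤ b)
    (ha : parent^[a] z = x) (hb : parent^[b] z = y) : False := by
  have hy : parent^[b - a] x = y := by rw [← iter_sub hab ha]; exact hb
  rcases Nat.eq_zero_or_pos (b - a) with h0 | hpos
  · rw [h0] at hy
    exact hxy hy
  · obtain ⟨c, hc⟩ : ∃ c, b - a = c + 1 := ⟨b - a - 1, by omega⟩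
    rw [hc, Function.iterate_succ_apply, hpx] at hy
    have hcyc : parent^[c + 1] u = u := by rw [Function.iterate_succ_apply', hy, hpy]
    have hu : u = root := cycle_root hroot hreach (by omega) hcyc
    rw [hu, iter_root hroot] at hy
    exact hyu (hy.symm.trans hu.symm)

lemma sibling_disjoint (hroot : parent root = root)
    (hreach : ∀ u, ∃ n : ℕ, parent^[n] u = root)
    {u x y z : V} (hpx : parent x = u) (hpy : parent y = u)
    (hxy : x ≠ y) (hxu : x ≠ u) (hyu : y ≠ u)
    (hzx : z ∈ subtreeSet parent x) (hzy : z ∈ subtreeSet parent y) : False := by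
  obtain ⟨a, ha⟩ := hzx; obtain ⟨b, hb⟩ := hzy
  rcases le_total a b with h | h
  · exact sibling_disjoint_aux hroot hreach hpx hpy hxy hyu h ha hb
  · exact sibling_disjoint_aux hroot hreach hpy hpx hxy.symm hxu h hb ha

lemma subtree_cases_internal {u : V} {lc rc : V → V} (hbin : isBinary parent lc rc)
    (hu : isInternal parent u) {x : V} (hx : x ∈ subtreeSet parent u) :
    x = u ∨ x ∈ subtreeSet parent (lc u) ∨ x ∈ subtreeSet parent (rc u) := by
  obtain ⟨n, hn⟩ := hx
  induction n generalizing x with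
  | zero => exact Or.inl hn
  | succ n ihn =>
      rw [Function.iterate_succ_apply] at hn
      rcases ihn hn with h | h | h
      · by_cases hxu : x = u
        · exact Or.inl hxu
        · rcases (hbin u hu).2.2.2.2.2 x hxu h with h' | h'
          · exact Or.inr (Or.inl ⟨0, h'⟩)
          · exact Or.inr (Or.inr ⟨0, h'⟩)
      · exact Or.inr (Or.inl (subtree_mono (child_mem_subtree rfl) h))
      · exact Or.inr (Or.inr (subtree_mono (child_mem_subtree rfl) h))

lemma subtree_leaf {u : V} (hu : ¬ isInternal parent u) {x : V}
    (hx : x ∈ subtreeSet parent u) : x = u := by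
  obtain ⟨n, hn⟩ := hx
  induction n generalizing x with
  | zero => exact hn
  | succ n ihn =>
      rw [Function.iterate_succ_apply] at hn
      have hp := ihn hn
      by_cases hxu : x = u
      · exact hxu
      · exact absurd ⟨x, hxu, hp⟩ hu

lemma mem_anc_of_subtree (hroot : parent root = root)
    (hreach : ∀ u, ∃ n : ℕ, parent^[n] u = root)
    {u x w : V} (hpx : parent x = u) (hxu : x ≠ u)
    (hw : w ∈ subtreeSet parent x) : u ∈ ancSet parent w := by
  obtain ⟨n, hn⟩ := hw
  refine ⟨?_, n + 1, ?_⟩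
  · rintro rfl
    exact not_mem_subtree_child hroot hreach hpx hxu ⟨n, hn⟩
  · rw [Function.iterate_succ_apply', hn, hpx]

lemma anc_step (hroot : parent root = root)
    (hreach : ∀ u, ∃ n : ℕ, parent^[n] u = root)
    {u x v : V} (hpx : parent x = u) (hxu : x ≠ u)
    (hv : v ∈ ancSet parent u) : v ∈ ancSet parent x := by
  obtain ⟨hvu, m, hm⟩ := hv
  refine ⟨?_, m + 1, by rw [Function.iterate_succ_apply, hpx]; exact hm⟩
  rintro rfl
  have hcyc : parent^[m + 1] v = v := by
    rw [Function.iterate_succ_apply, hpx]; exact hm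
  have hvr := cycle_root hroot hreach (by omega) hcyc
  have hur : u = root := by rw [← hpx, hvr, hroot]
  exact hvu (hvr.trans hur.symm)

lemma anc_not_mem_subtree (hroot : parent root = root)
    (hreach : ∀ u, ∃ n : ℕ, parent^[n] u = root)
    {u x v : V} (hpx : parent x = u) (hxu : x ≠ u)
    (hv : v ∈ ancSet parent u) : v ∉ subtreeSet parent x := by
  obtain ⟨hvu, m, hm⟩ := hv
  rintro ⟨a, ha⟩
  have h1 : parent^[a + m] u = x := by
    rw [Function.iterate_add_apply, hm]; exact ha
  have h2 : parent^[a + m + 1] u = u := by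
    rw [Function.iterate_succ_apply', h1, hpx]
  have hu := cycle_root hroot hreach (by omega) h2
  apply hvu
  rw [hu] at hm ⊢
  rw [iter_root hroot] at hm
  exact hm.symm

lemma anc_cross (hroot : parent root = root)
    (hreach : ∀ u, ∃ n : ℕ, parent^[n] u = root)
    {u x y w v : V} (hpx : parent x = u) (hpy : parent y = u)
    (hxy : x ≠ y) (hxu : x ≠ u) (hyu : y ≠ u)
    (hw : w ∈ subtreeSet parent x) (hv : v ∈ ancSet parent w)
    (hvy : v ∈ subtreeSet parent y) : False := by
  obtain ⟨n, hn⟩ := hw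
  obtain ⟨hvw, m, hm⟩ := hv
  rcases le_total m n with h | h
  · have hvx : v ∈ subtreeSet parent x := ⟨n - m, (iter_sub h hm).symm.trans hn⟩
    exact sibling_disjoint hroot hreach hpx hpy hxy hxu hyu hvx hvy
  · have hvv : v = parent^[m - n] x := hm.symm.trans (iter_sub h hn)
    rcases Nat.eq_zero_or_pos (m - n) with h0 | hpos
    · rw [h0] at hvv
      simp only [Function.iterate_zero_apply] at hvv
      subst hvv
      exact sibling_disjoint hroot hreach hpx hpy hxy hxu hyu (mem_subtree_self _) hvy
    · obtain ⟨c, hc⟩ : ∃ c, m - n = c + 1 := ⟨m - n - 1, by omega⟩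
      rw [hc, Function.iterate_succ_apply, hpx] at hvv
      obtain ⟨a, ha⟩ := hvy
      have h1 : parent^[a + c] u = y := by
        rw [Function.iterate_add_apply, ← hvv]; exact ha
      have h2 : parent^[a + c + 1] u = u := by
        rw [Function.iterate_succ_apply', h1, hpy]
      have hu := cycle_root hroot hreach (by omega) h2
      have hvu : v = u := by rw [hvv, hu, iter_root hroot]
      exact not_mem_subtree_child hroot hreach hpy hyu ⟨a, by rw [← hvu]; exact ha⟩

lemma anc_escape (hroot : parent root = root)
    (hreach : ∀ u, ∃ n : ℕ, parent^[n] u = root)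
    {u x w v : V} (hpx : parent x = u) (hxu : x ≠ u)
    (hw : w ∈ subtreeSet parent x) (hv : v ∈ ancSet parent w)
    (hvx : v ∉ subtreeSet parent x) (hvu : v ≠ u) : v ∈ ancSet parent u := by
  obtain ⟨n, hn⟩ := hw
  obtain ⟨hvw, m, hm⟩ := hv
  rcases le_total m n with h | h
  · exact absurd ⟨n - m, (iter_sub h hm).symm.trans hn⟩ hvx
  · have hvv : v = parent^[m - n] x := hm.symm.trans (iter_sub h hn)
    rcases Nat.eq_zero_or_pos (m - n) with h0 | hpos
    · rw [h0] at hvv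
      simp only [Function.iterate_zero_apply] at hvv
      subst hvv
      exact absurd (mem_subtree_self _) hvx
    · obtain ⟨c, hc⟩ : ∃ c, m - n = c + 1 := ⟨m - n - 1, by omega⟩
      rw [hc, Function.iterate_succ_apply, hpx] at hvv
      exact ⟨hvu, c, hvv.symm⟩

end Helpers
section Layer2

variable {V : Type*} {parent : V → V} {root : V}

lemma mem_optSet {vo : Option V} {v : V} : v ∈ optSet vo ↔ vo = some v := by
  cases vo <;> simp [optSet, eq_comm]

lemma useful_congr {α : Type*} (vars : V → Set α) (Zq : Set α) (w : V) (S S' : Set V)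
    (h : (∃ v, v ∈ ancSet parent w ∧ v ∈ S ∧ vars v ⊆ Zq) ↔
         (∃ v, v ∈ ancSet parent w ∧ v ∈ S' ∧ vars v ⊆ Zq)) :
    useful parent vars Zq w S = useful parent vars Zq w S' := by
  unfold useful
  refine if_congr ?_ rfl rfl
  constructor
  · rintro ⟨h1, h2⟩
    refine ⟨h1, fun v hv hvz => ?_⟩
    obtain ⟨v', ha', hs', hz'⟩ := h.mpr ⟨v, hv.1, hv.2, hvz⟩
    exact h2 v' ⟨ha', hs'⟩ hz'
  · rintro ⟨h1, h2⟩
    refine ⟨h1, fun v hv hvz => ?_⟩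
    obtain ⟨v', ha', hs', hz'⟩ := h.mp ⟨v, hv.1, hv.2, hvz⟩
    exact h2 v' ⟨ha', hs'⟩ hz'

lemma eInd_congr {α Q : Type*} [Fintype Q] (vars : V → Set α) (Z : Q → Set α) (Pr : Q → ℝ)
    (w : V) (S S' : Set V)
    (h : ∀ q, (∃ v, v ∈ ancSet parent w ∧ v ∈ S ∧ vars v ⊆ Z q) ↔
              (∃ v, v ∈ ancSet parent w ∧ v ∈ S' ∧ vars v ⊆ Z q)) :
    eInd parent vars Z Pr w S = eInd parent vars Z Pr w S' := by
  unfold eInd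
  exact Finset.sum_congr rfl fun q _ => by
    rw [useful_congr vars (Z q) w S S' (h q)]

end Layer2

/-- The conditional benefit of `R` given context `vo`. -/
noncomputable def condB {V α Q : Type*} [Fintype V] [Fintype Q] (parent : V → V)
    (vars : V → Set α) (Z : Q → Set α) (Pr : Q → ℝ) (c : V → ℝ)
    (vo : Option V) (R : Finset V) : ℝ :=
  ∑ w ∈ R, eInd parent vars Z Pr w (↑R ∪ optSet vo) * util parent c w

section Layer3

variable {V α Q : Type*} [Fintype V] [DecidableEq V] [Fintype Q]
  {parent : V → V} {root : V}
  (vars : V → Set α) (Z : Q → Set α) (Pr : Q → ℝ) (c : V → ℝ)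

lemma condB_union (hroot : parent root = root)
    (hreach : ∀ u, ∃ n : ℕ, parent^[n] u = root)
    {u x y : V} (hpx : parent x = u) (hpy : parent y = u)
    (hxy : x ≠ y) (hxu : x ≠ u) (hyu : y ≠ u)
    (vo : Option V)
    {Rx Ry : Finset V} (hRx : ∀ w ∈ Rx, w ∈ subtreeSet parent x)
    (hRy : ∀ w ∈ Ry, w ∈ subtreeSet parent y) :
    condB parent vars Z Pr c vo (Rx ∪ Ry) =
      condB parent vars Z Pr c vo Rx + condB parent vars Z Pr c vo Ry := by
  have hdisj : Disjoint Rx Ry := Finset.disjoint_left.mpr fun a ha hb =>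
    (sibling_disjoint hroot hreach hpx hpy hxy hxu hyu (hRx a ha) (hRy a hb)).elim
  unfold condB
  rw [Finset.sum_union hdisj]
  congr 1
  · refine Finset.sum_congr rfl fun w hw => ?_
    congr 1
    apply eInd_congr
    intro q
    constructor
    · rintro ⟨v, ha, hs, hz⟩
      simp only [Finset.coe_union, Set.mem_union, Finset.mem_coe] at hs
      rcases hs with (hs | hs) | hs
      · exact ⟨v, ha, Or.inl hs, hz⟩
      · exact (anc_cross hroot hreach hpx hpy hxy hxu hyu (hRx w hw) ha (hRy v hs)).elim
      · exact ⟨v, ha, Or.inr hs, hz⟩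
    · rintro ⟨v, ha, hs, hz⟩
      refine ⟨v, ha, ?_, hz⟩
      simp only [Finset.coe_union, Set.mem_union, Finset.mem_coe] at hs ⊢
      tauto
  · refine Finset.sum_congr rfl fun w hw => ?_
    congr 1
    apply eInd_congr
    intro q
    constructor
    · rintro ⟨v, ha, hs, hz⟩
      simp only [Finset.coe_union, Set.mem_union, Finset.mem_coe] at hs
      rcases hs with (hs | hs) | hs
      · exact (anc_cross hroot hreach hpy hpx hxy.symm hyu hxu (hRy w hw) ha (hRx v hs)).elim
      · exact ⟨v, ha, Or.inl hs, hz⟩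
      · exact ⟨v, ha, Or.inr hs, hz⟩
    · rintro ⟨v, ha, hs, hz⟩
      refine ⟨v, ha, ?_, hz⟩
      simp only [Finset.coe_union, Set.mem_union, Finset.mem_coe] at hs ⊢
      tauto

lemma condB_insert (hroot : parent root = root)
    (hreach : ∀ u, ∃ n : ℕ, parent^[n] u = root)
    (hvars : ∀ u v : V, v ∈ ancSet parent u → vars u ⊆ vars v)
    {u x y : V} (hpx : parent x = u) (hpy : parent y = u)
    (hxy : x ≠ y) (hxu : x ≠ u) (hyu : y ≠ u)
    (vo : Option V) (hvo : ∀ v ∈ vo, v ∈ ancSet parent u)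
    {Rx Ry : Finset V} (hRx : ∀ w ∈ Rx, w ∈ subtreeSet parent x)
    (hRy : ∀ w ∈ Ry, w ∈ subtreeSet parent y) :
    condB parent vars Z Pr c vo (insert u (Rx ∪ Ry)) =
      eInd parent vars Z Pr u (optSet vo) * util parent c u
      + condB parent vars Z Pr c (some u) Rx + condB parent vars Z Pr c (some u) Ry := by
  have hux : u ∉ Rx := fun h => not_mem_subtree_child hroot hreach hpx hxu (hRx u h)
  have huy : u ∉ Ry := fun h => not_mem_subtree_child hroot hreach hpy hyu (hRy u h)
  have hdisj : Disjoint Rx Ry := Finset.disjoint_left.mpr fun a ha hb =>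
    (sibling_disjoint hroot hreach hpx hpy hxy hxu hyu (hRx a ha) (hRy a hb)).elim
  unfold condB
  rw [Finset.sum_insert (by simp [hux, huy]), Finset.sum_union hdisj]
  have h1 : eInd parent vars Z Pr u (↑(insert u (Rx ∪ Ry)) ∪ optSet vo) =
      eInd parent vars Z Pr u (optSet vo) := by
    apply eInd_congr
    intro q
    constructor
    · rintro ⟨v, ha, hs, hz⟩
      simp only [Finset.coe_insert, Set.mem_union, Set.mem_insert_iff,
        Finset.coe_union, Finset.mem_coe, Finset.mem_union] at hs
      rcases hs with (rfl | hs | hs) | hs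
      · exact absurd rfl ha.1
      · exact (anc_not_mem_subtree hroot hreach hpx hxu ha (hRx v hs)).elim
      · exact (anc_not_mem_subtree hroot hreach hpy hyu ha (hRy v hs)).elim
      · exact ⟨v, ha, hs, hz⟩
    · rintro ⟨v, ha, hs, hz⟩
      exact ⟨v, ha, Or.inr hs, hz⟩
  -- generic lemma for one side
  have key : ∀ (x' y' : V), parent x' = u → parent y' = u → x' ≠ y' → x' ≠ u → y' ≠ u →
      ∀ (Rx' Ry' : Finset V), (∀ w ∈ Rx', w ∈ subtreeSet parent x') →
      (∀ w ∈ Ry', w ∈ subtreeSet parent y') →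
      ∀ w ∈ Rx',
      eInd parent vars Z Pr w (↑(insert u (Rx' ∪ Ry')) ∪ optSet vo) =
        eInd parent vars Z Pr w (↑Rx' ∪ optSet (some u)) := by
    intro x' y' hpx' hpy' hxy' hxu' hyu' Rx' Ry' hRx' hRy' w hw
    have huanc : u ∈ ancSet parent w := mem_anc_of_subtree hroot hreach hpx' hxu' (hRx' w hw)
    apply eInd_congr
    intro q
    constructor
    · rintro ⟨v, ha, hs, hz⟩
      simp only [Finset.coe_insert, Set.mem_union, Set.mem_insert_iff,
        Finset.coe_union, Finset.mem_coe, Finset.mem_union] at hs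
      rcases hs with (rfl | hs | hs) | hs
      · exact ⟨v, ha, Or.inr (by simp [optSet]), hz⟩
      · exact ⟨v, ha, Or.inl hs, hz⟩
      · exact (anc_cross hroot hreach hpx' hpy' hxy' hxu' hyu' (hRx' w hw) ha (hRy' v hs)).elim
      · -- v comes from the context vo : it is an ancestor of u, replace it by u
        have hvsome : vo = some v := mem_optSet.mp hs
        have hvanc : v ∈ ancSet parent u := hvo v (by rw [hvsome]; rfl)
        exact ⟨u, huanc, Or.inr (by simp [optSet]), (hvars u v hvanc).trans hz⟩
    · rintro ⟨v, ha, hs, hz⟩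
      simp only [Set.mem_union, Finset.mem_coe] at hs
      rcases hs with hs | hs
      · exact ⟨v, ha, Or.inl (by simp [hs]), hz⟩
      · have : v = u := by simpa [optSet] using hs
        subst this
        exact ⟨v, ha, Or.inl (by simp), hz⟩
  have h2 := fun w hw => key x y hpx hpy hxy hxu hyu Rx Ry hRx hRy w hw
  have h3 := fun w hw => key y x hpy hpx hxy.symm hyu hxu Ry Rx hRy hRx w hw
  have e2 : ∀ w ∈ Rx,
      eInd parent vars Z Pr w (↑(insert u (Rx ∪ Ry)) ∪ optSet vo) * util parent c w =
      eInd parent vars Z Pr w (↑Rx ∪ optSet (some u)) * util parent c w := by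
    intro w hw; rw [h2 w hw]
  have e3 : ∀ w ∈ Ry,
      eInd parent vars Z Pr w (↑(insert u (Rx ∪ Ry)) ∪ optSet vo) * util parent c w =
      eInd parent vars Z Pr w (↑Ry ∪ optSet (some u)) * util parent c w := by
    intro w hw
    rw [show ((insert u (Rx ∪ Ry) : Finset V) : Set V) = ↑(insert u (Ry ∪ Rx)) by
      simp [Finset.union_comm]]
    exact congrArg (· * util parent c w) (h3 w hw)
  rw [h1, Finset.sum_congr rfl e2, Finset.sum_congr rfl e3]
  ring

end Layer3
lemma dp_main {V α Q : Type*} [Fintype V] [DecidableEq V] [Fintype Q]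
    (root : V) (parent : V → V)
    (hroot : parent root = root)
    (hreach : ∀ u, ∃ n : ℕ, parent^[n] u = root)
    (lc rc : V → V) (hbin : isBinary parent lc rc)
    (vars : V → Set α)
    (hvars : ∀ u v : V, v ∈ ancSet parent u → vars u ⊆ vars v)
    (Z : Q → Set α) (Pr : Q → ℝ) (c : V → ℝ)
    (A A0 A1 : V → ℕ → Option V → EReal)
    (hAzero : ∀ u : V, ∀ vo : Option V, (∀ v ∈ vo, v ∈ ancSet parent u) →
      A u 0 vo = 0)
    (hleaf : ∀ u : V, ¬ isInternal parent u → ∀ κ : ℕ, 1 ≤ κ →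
      ∀ vo : Option V, (∀ v ∈ vo, v ∈ ancSet parent u) →
        A0 u κ vo = 0 ∧ A1 u κ vo = ⊥)
    (hA1 : ∀ u : V, isInternal parent u → ∀ κ : ℕ, 1 ≤ κ →
      ∀ vo : Option V, (∀ v ∈ vo, v ∈ ancSet parent u) →
        A1 u κ vo =
          ((eInd parent vars Z Pr u (optSet vo) * util parent c u : ℝ) : EReal) +
          sSup {x : EReal | ∃ κl κr : ℕ, κl + κr = κ - 1 ∧
            x = A (lc u) κl (some u) + A (rc u) κr (some u)})
    (hA0 : ∀ u : V, isInternal parent u → ∀ κ : ℕ, 1 ≤ κ →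
      ∀ vo : Option V, (∀ v ∈ vo, v ∈ ancSet parent u) →
        A0 u κ vo = sSup {x : EReal | ∃ κl κr : ℕ, κl + κr = κ ∧
          x = A (lc u) κl vo + A (rc u) κr vo})
    (hAmax : ∀ u : V, ∀ κ : ℕ, 1 ≤ κ →
      ∀ vo : Option V, (∀ v ∈ vo, v ∈ ancSet parent u) →
        A u κ vo = max (A1 u κ vo) (A0 u κ vo)) :
    ∀ n : ℕ, ∀ u : V, (Finset.univ.filter (fun z => z ∈ subtreeSet parent u)).card ≤ n →
      ∀ κ : ℕ, ∀ vo : Option V, (∀ v ∈ vo, v ∈ ancSet parent u) →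
      (∀ R : Finset V, (∀ w ∈ R, isInternal parent w ∧ w ∈ subtreeSet parent u) →
          R.card ≤ κ → ((condB parent vars Z Pr c vo R : ℝ) : EReal) ≤ A u κ vo) ∧
      (∃ R : Finset V, (∀ w ∈ R, isInternal parent w ∧ w ∈ subtreeSet parent u) ∧
          R.card ≤ κ ∧ A u κ vo = ((condB parent vars Z Pr c vo R : ℝ) : EReal)) := by
  intro n
  induction n with
  | zero =>
      intro u hu
      exfalso
      have hmem : u ∈ Finset.univ.filter (fun z => z ∈ subtreeSet parent u) := by
        simp [mem_subtree_self]
      have := Finset.card_pos.mpr ⟨u, hmem⟩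
      omega
  | succ n ih =>
      intro u hsize κ vo hvo
      rcases Nat.eq_zero_or_pos κ with rfl | hκ
      · -- κ = 0
        have hA := hAzero u vo hvo
        constructor
        · intro R hR hcard
          have hRe : R = ∅ := Finset.card_eq_zero.mp (le_antisymm hcard (Nat.zero_le _))
          subst hRe
          rw [hA]
          simp [condB]
        · exact ⟨∅, by simp, by simp, by rw [hA]; simp [condB]⟩
      by_cases hint : isInternal parent u
      · -- internal node
        obtain ⟨hlr, hpl, hpr, hlune, hrune, hchild⟩ := hbin u hint
        have hsub : ∀ x : V, parent x = u → x ≠ u →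
            (Finset.univ.filter (fun z => z ∈ subtreeSet parent x)).card ≤ n := by
          intro x hpx hxu
          have hsubset : Finset.univ.filter (fun z => z ∈ subtreeSet parent x) ⊆
              Finset.univ.filter (fun z => z ∈ subtreeSet parent u) := by
            intro z hz
            simp only [Finset.mem_filter, Finset.mem_univ, true_and] at hz ⊢
            exact subtree_mono hz (child_mem_subtree hpx)
          have hss : Finset.univ.filter (fun z => z ∈ subtreeSet parent x) ⊂
              Finset.univ.filter (fun z => z ∈ subtreeSet parent u) :=
            (Finset.ssubset_iff_of_subset hsubset).mpr
              ⟨u, by simp [mem_subtree_self],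
                by simp [not_mem_subtree_child hroot hreach hpx hxu]⟩
          have := Finset.card_lt_card hss
          omega
        have IHl := ih (lc u) (hsub (lc u) hpl hlune)
        have IHr := ih (rc u) (hsub (rc u) hpr hrune)
        have hvol : ∀ v ∈ vo, v ∈ ancSet parent (lc u) :=
          fun v hv => anc_step hroot hreach hpl hlune (hvo v hv)
        have hvor : ∀ v ∈ vo, v ∈ ancSet parent (rc u) :=
          fun v hv => anc_step hroot hreach hpr hrune (hvo v hv)
        have huancl : ∀ v ∈ (some u : Option V), v ∈ ancSet parent (lc u) := by
          intro v hv
          simp only [Option.mem_def, Option.some.injEq] at hv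
          subst hv
          exact mem_anc_of_subtree hroot hreach hpl hlune (mem_subtree_self (lc u))
        have huancr : ∀ v ∈ (some u : Option V), v ∈ ancSet parent (rc u) := by
          intro v hv
          simp only [Option.mem_def, Option.some.injEq] at hv
          subst hv
          exact mem_anc_of_subtree hroot hreach hpr hrune (mem_subtree_self (rc u))
        constructor
        · -- upper bound direction
          intro R hR hcard
          have hmf : ∀ w ∈ R, w = u ∨ w ∈ subtreeSet parent (lc u) ∨
              w ∈ subtreeSet parent (rc u) :=
            fun w hw => subtree_cases_internal hbin hint (hR w hw).2
          set Rl := R.filter (fun z => z ∈ subtreeSet parent (lc u)) with hRldef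
          set Rr := R.filter (fun z => z ∈ subtreeSet parent (rc u)) with hRrdef
          have hRl : ∀ w ∈ Rl, w ∈ subtreeSet parent (lc u) :=
            fun w hw => (Finset.mem_filter.mp hw).2
          have hRr : ∀ w ∈ Rr, w ∈ subtreeSet parent (rc u) :=
            fun w hw => (Finset.mem_filter.mp hw).2
          have hRlv : ∀ w ∈ Rl, isInternal parent w ∧ w ∈ subtreeSet parent (lc u) :=
            fun w hw => ⟨(hR w (Finset.mem_filter.mp hw).1).1, (Finset.mem_filter.mp hw).2⟩
          have hRrv : ∀ w ∈ Rr, isInternal parent w ∧ w ∈ subtreeSet parent (rc u) :=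
            fun w hw => ⟨(hR w (Finset.mem_filter.mp hw).1).1, (Finset.mem_filter.mp hw).2⟩
          have hdisjlr : Disjoint Rl Rr := Finset.disjoint_left.mpr fun a ha hb =>
            (sibling_disjoint hroot hreach hpl hpr hlr hlune hrune (hRl a ha) (hRr a hb)).elim
          have hul : u ∉ Rl := fun h => not_mem_subtree_child hroot hreach hpl hlune (hRl u h)
          have hur : u ∉ Rr := fun h => not_mem_subtree_child hroot hreach hpr hrune (hRr u h)
          rw [hAmax u κ hκ vo hvo]
          by_cases huR : u ∈ R
          · -- R = insert u (Rl ∪ Rr), bound via A1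
            have hdecomp : R = insert u (Rl ∪ Rr) := by
              ext w
              simp only [Finset.mem_insert, Finset.mem_union, hRldef, hRrdef,
                Finset.mem_filter]
              constructor
              · intro hw
                rcases hmf w hw with h | h | h
                · exact Or.inl h
                · exact Or.inr (Or.inl ⟨hw, h⟩)
                · exact Or.inr (Or.inr ⟨hw, h⟩)
              · rintro (rfl | ⟨hw, -⟩ | ⟨hw, -⟩)
                · exact huR
                · exact hw
                · exact hw
            have hcards : Rl.card + Rr.card + 1 = R.card := by
              rw [hdecomp, Finset.card_insert_of_notMem (by simp [hul, hur]),
                Finset.card_union_of_disjoint hdisjlr]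
            have hBl := (IHl Rl.card (some u) huancl).1 Rl hRlv le_rfl
            have hBr := (IHr (κ - 1 - Rl.card) (some u) huancr).1 Rr hRrv (by omega)
            have hcondB : condB parent vars Z Pr c vo R =
                eInd parent vars Z Pr u (optSet vo) * util parent c u
                + condB parent vars Z Pr c (some u) Rl
                + condB parent vars Z Pr c (some u) Rr := by
              rw [hdecomp]
              exact condB_insert vars Z Pr c hroot hreach hvars hpl hpr hlr hlune hrune
                vo hvo hRl hRr
            rw [hcondB]
            refine le_trans ?_ (le_max_left _ _)
            rw [hA1 u hint κ hκ vo hvo, EReal.coe_add, EReal.coe_add, add_assoc]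
            refine add_le_add le_rfl ?_
            refine le_trans (add_le_add hBl hBr) ?_
            exact le_sSup ⟨Rl.card, κ - 1 - Rl.card, by omega, rfl⟩
          · -- R = Rl ∪ Rr, bound via A0
            have hdecomp : R = Rl ∪ Rr := by
              ext w
              simp only [Finset.mem_union, hRldef, hRrdef, Finset.mem_filter]
              constructor
              · intro hw
                rcases hmf w hw with h | h | h
                · exact absurd (h ▸ hw) huR
                · exact Or.inl ⟨hw, h⟩
                · exact Or.inr ⟨hw, h⟩
              · rintro (⟨hw, -⟩ | ⟨hw, -⟩) <;> exact hw
            have hcards : Rl.card + Rr.card = R.card := by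
              rw [hdecomp, Finset.card_union_of_disjoint hdisjlr]
            have hBl := (IHl Rl.card vo hvol).1 Rl hRlv le_rfl
            have hBr := (IHr (κ - Rl.card) vo hvor).1 Rr hRrv (by omega)
            have hcondB : condB parent vars Z Pr c vo R =
                condB parent vars Z Pr c vo Rl + condB parent vars Z Pr c vo Rr := by
              rw [hdecomp]
              exact condB_union vars Z Pr c hroot hreach hpl hpr hlr hlune hrune vo hRl hRr
            rw [hcondB]
            refine le_trans ?_ (le_max_right _ _)
            rw [hA0 u hint κ hκ vo hvo, EReal.coe_add]
            refine le_trans (add_le_add hBl hBr) ?_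
            exact le_sSup ⟨Rl.card, κ - Rl.card, by omega, rfl⟩
        · -- attainability direction
          rw [hAmax u κ hκ vo hvo]
          -- A0 candidate
          have hattain : ∀ (κ' : ℕ) (vo' : Option V),
              ∃ κl κr : ℕ, κl + κr = κ' ∧
                sSup {x : EReal | ∃ κl κr : ℕ, κl + κr = κ' ∧
                  x = A (lc u) κl vo' + A (rc u) κr vo'} =
                A (lc u) κl vo' + A (rc u) κr vo' := by
            intro κ' vo'
            have hset : {x : EReal | ∃ κl κr : ℕ, κl + κr = κ' ∧
                x = A (lc u) κl vo' + A (rc u) κr vo'} =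
                (fun i => A (lc u) i vo' + A (rc u) (κ' - i) vo') '' (Set.Iic κ') := by
              ext x
              constructor
              · rintro ⟨κl, κr, hs, rfl⟩
                refine ⟨κl, by simp; omega, ?_⟩
                show A (lc u) κl vo' + A (rc u) (κ' - κl) vo' = _
                rw [show κ' - κl = κr by omega]
              · rintro ⟨i, hi, rfl⟩
                simp only [Set.mem_Iic] at hi
                exact ⟨i, κ' - i, by omega, rfl⟩
            have hfin : {x : EReal | ∃ κl κr : ℕ, κl + κr = κ' ∧
                x = A (lc u) κl vo' + A (rc u) κr vo'}.Finite := by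
              rw [hset]; exact (Set.finite_Iic κ').image _
            have hne : {x : EReal | ∃ κl κr : ℕ, κl + κr = κ' ∧
                x = A (lc u) κl vo' + A (rc u) κr vo'}.Nonempty :=
              ⟨_, ⟨0, κ', by omega, rfl⟩⟩
            exact hne.csSup_mem hfin
          -- candidate attaining A0
          obtain ⟨κl, κr, hsum, hval⟩ := hattain κ vo
          obtain ⟨Rl, hRlv, hRlc, hAl⟩ := (IHl κl vo hvol).2
          obtain ⟨Rr, hRrv, hRrc, hAr⟩ := (IHr κr vo hvor).2
          have hRl : ∀ w ∈ Rl, w ∈ subtreeSet parent (lc u) := fun w hw => (hRlv w hw).2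
          have hRr : ∀ w ∈ Rr, w ∈ subtreeSet parent (rc u) := fun w hw => (hRrv w hw).2
          have hA0eq : A0 u κ vo =
              ((condB parent vars Z Pr c vo (Rl ∪ Rr) : ℝ) : EReal) := by
            rw [hA0 u hint κ hκ vo hvo, hval, hAl, hAr, ← EReal.coe_add,
              condB_union vars Z Pr c hroot hreach hpl hpr hlr hlune hrune vo hRl hRr]
          -- candidate attaining A1
          obtain ⟨κl', κr', hsum', hval'⟩ := hattain (κ - 1) (some u)
          obtain ⟨Rl', hRlv', hRlc', hAl'⟩ := (IHl κl' (some u) huancl).2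
          obtain ⟨Rr', hRrv', hRrc', hAr'⟩ := (IHr κr' (some u) huancr).2
          have hRl' : ∀ w ∈ Rl', w ∈ subtreeSet parent (lc u) := fun w hw => (hRlv' w hw).2
          have hRr' : ∀ w ∈ Rr', w ∈ subtreeSet parent (rc u) := fun w hw => (hRrv' w hw).2
          have hA1eq : A1 u κ vo =
              ((condB parent vars Z Pr c vo (insert u (Rl' ∪ Rr')) : ℝ) : EReal) := by
            rw [hA1 u hint κ hκ vo hvo, hval', hAl', hAr',
              condB_insert vars Z Pr c hroot hreach hvars hpl hpr hlr hlune hrune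
                vo hvo hRl' hRr']
            norm_cast
            ring
          rcases le_total (A1 u κ vo) (A0 u κ vo) with hle | hle
          · refine ⟨Rl ∪ Rr, ?_, ?_, by rw [max_eq_right hle, hA0eq]⟩
            · intro w hw
              rcases Finset.mem_union.mp hw with h | h
              · exact ⟨(hRlv w h).1, subtree_mono (hRlv w h).2 (child_mem_subtree hpl)⟩
              · exact ⟨(hRrv w h).1, subtree_mono (hRrv w h).2 (child_mem_subtree hpr)⟩
            · calc (Rl ∪ Rr).card ≤ Rl.card + Rr.card := Finset.card_union_le _ _
                _ ≤ κl + κr := by omega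
                _ = κ := hsum
          · refine ⟨insert u (Rl' ∪ Rr'), ?_, ?_, by rw [max_eq_left hle, hA1eq]⟩
            · intro w hw
              rcases Finset.mem_insert.mp hw with rfl | hw'
              · exact ⟨hint, mem_subtree_self w⟩
              · rcases Finset.mem_union.mp hw' with h | h
                · exact ⟨(hRlv' w h).1, subtree_mono (hRlv' w h).2 (child_mem_subtree hpl)⟩
                · exact ⟨(hRrv' w h).1, subtree_mono (hRrv' w h).2 (child_mem_subtree hpr)⟩
            · calc (insert u (Rl' ∪ Rr')).card ≤ (Rl' ∪ Rr').card + 1 :=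
                    Finset.card_insert_le _ _
                _ ≤ Rl'.card + Rr'.card + 1 := by
                    have := Finset.card_union_le Rl' Rr'; omega
                _ ≤ κl' + κr' + 1 := by omega
                _ = κ := by omega
      · -- leaf
        have hAval : A u κ vo = 0 := by
          rw [hAmax u κ hκ vo hvo, (hleaf u hint κ hκ vo hvo).1,
            (hleaf u hint κ hκ vo hvo).2]
          simp
        have hRe : ∀ R : Finset V,
            (∀ w ∈ R, isInternal parent w ∧ w ∈ subtreeSet parent u) → R = ∅ := by
          intro R hR
          refine Finset.eq_empty_iff_forall_notMem.mpr fun w hw => ?_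
          exact hint ((subtree_leaf hint (hR w hw).2) ▸ (hR w hw).1)
        constructor
        · intro R hR hcard
          rw [hRe R hR, hAval]
          simp [condB]
        · exact ⟨∅, by simp, by simp, by rw [hAval]; simp [condB]⟩

/-- Correctness of the dynamic program: on a binary elimination
tree, any tables `A, A⁰, A¹` over the extended reals satisfying the recurrences
`A(u,0,v) = 0`; for leaves and `κ ≥ 1`, `A⁰(u,κ,v) = 0`, `A¹(u,κ,v) = −∞`;
for internal `u` and `κ ≥ 1`,
`A¹(u,κ,v) = E[I(u|{v})]·U(u) + max_{κℓ+κr=κ−1} (A(ℓ(u),κℓ,u) + A(r(u),κr,u))`,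
`A⁰(u,κ,v) = max_{κℓ+κr=κ} (A(ℓ(u),κℓ,v) + A(r(u),κr,v))`, and
`A(u,κ,v) = max{A¹(u,κ,v), A⁰(u,κ,v)}` for `κ ≥ 1`, satisfy:
`A(r,k,ε)` is the maximum of `B(R)` over all leaf-free `R ⊆ V` with `|R| ≤ k`. -/
theorem dynamic_program_optimal {V α Q : Type*} [Fintype V] [DecidableEq V] [Fintype Q]
    (root : V) (parent : V → V)
    (hroot : parent root = root)
    (hreach : ∀ u, ∃ n : ℕ, parent^[n] u = root)
    (lc rc : V → V) (hbin : isBinary parent lc rc)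
    (vars : V → Set α)
    (hvars : ∀ u v : V, v ∈ ancSet parent u → vars u ⊆ vars v)
    (Z : Q → Set α) (Pr : Q → ℝ)
    (hPr0 : ∀ q, 0 ≤ Pr q) (hPr1 : ∑ q : Q, Pr q = 1)
    (c : V → ℝ) (hc : ∀ x, 0 ≤ c x)
    (k : ℕ) (hk : 0 < k)
    (A A0 A1 : V → ℕ → Option V → EReal)
    (hAzero : ∀ u : V, ∀ vo : Option V, (∀ v ∈ vo, v ∈ ancSet parent u) →
      A u 0 vo = 0)
    (hleaf : ∀ u : V, ¬ isInternal parent u → ∀ κ : ℕ, 1 ≤ κ →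
      ∀ vo : Option V, (∀ v ∈ vo, v ∈ ancSet parent u) →
        A0 u κ vo = 0 ∧ A1 u κ vo = ⊥)
    (hA1 : ∀ u : V, isInternal parent u → ∀ κ : ℕ, 1 ≤ κ →
      ∀ vo : Option V, (∀ v ∈ vo, v ∈ ancSet parent u) →
        A1 u κ vo =
          ((eInd parent vars Z Pr u (optSet vo) * util parent c u : ℝ) : EReal) +
          sSup {x : EReal | ∃ κl κr : ℕ, κl + κr = κ - 1 ∧
            x = A (lc u) κl (some u) + A (rc u) κr (some u)})
    (hA0 : ∀ u : V, isInternal parent u → ∀ κ : ℕ, 1 ≤ κ →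
      ∀ vo : Option V, (∀ v ∈ vo, v ∈ ancSet parent u) →
        A0 u κ vo = sSup {x : EReal | ∃ κl κr : ℕ, κl + κr = κ ∧
          x = A (lc u) κl vo + A (rc u) κr vo})
    (hAmax : ∀ u : V, ∀ κ : ℕ, 1 ≤ κ →
      ∀ vo : Option V, (∀ v ∈ vo, v ∈ ancSet parent u) →
        A u κ vo = max (A1 u κ vo) (A0 u κ vo)) :
    A root k none = sSup {x : EReal | ∃ R : Finset V,
      (∀ u ∈ R, isInternal parent u) ∧ R.card ≤ k ∧
      x = ((benefit parent vars Z Pr c R : ℝ) : EReal)} := by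
  have hben : ∀ R : Finset V,
      benefit parent vars Z Pr c R = condB parent vars Z Pr c none R := by
    intro R
    unfold benefit condB
    refine Finset.sum_congr rfl fun w _ => ?_
    rw [show ((R : Set V) ∪ optSet (none : Option V)) = (R : Set V) by
      simp [optSet]]
  have hcard : (Finset.univ.filter (fun z => z ∈ subtreeSet parent root)).card ≤
      Fintype.card V := by
    simpa using Finset.card_filter_le Finset.univ (fun z => z ∈ subtreeSet parent root)
  obtain ⟨hub, R0, hR0v, hR0c, hR0eq⟩ :=
    dp_main root parent hroot hreach lc rc hbin vars hvars Z Pr c A A0 A1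
      hAzero hleaf hA1 hA0 hAmax (Fintype.card V) root hcard k none (by simp)
  apply le_antisymm
  · rw [hR0eq]
    exact le_sSup ⟨R0, fun w hw => (hR0v w hw).1, hR0c, by rw [hben]⟩
  · apply sSup_le
    rintro x ⟨R, hRint, hRc, rfl⟩
    rw [hben]
    exact hub R (fun w hw => ⟨hRint w hw, hreach w⟩) hRc
end

section
/- Let k be a positive integer and let R_0 = ∅, R_{i+1} = R_i ∪ {u_i} where u_i ∈ V \ R_i maximizes the marginal benefit B(R_i ∪ {u}) − B(R_i) over u ∈ V \ R_i, for i = 0, …, k−1. Then the greedy solution satisfies B(R_k) ≥ (1 − 1/e) · max{ B(R) : R ⊆ V, |R| ≤ k }. -/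
open scoped Classical

section Aux

variable {V : Type*} {parent : V → V}

lemma subtree_trans' {u v x : V} (h1 : x ∈ subtreeSet parent u)
    (h2 : u ∈ subtreeSet parent v) : x ∈ subtreeSet parent v := by
  obtain ⟨m, hm⟩ := h1; obtain ⟨n, hn⟩ := h2
  exact ⟨n + m, by rw [Function.iterate_add_apply, hm, hn]⟩

lemma subtree_total' {u v x : V} (h1 : x ∈ subtreeSet parent u)
    (h2 : x ∈ subtreeSet parent v) :
    u ∈ subtreeSet parent v ∨ v ∈ subtreeSet parent u := by
  obtain ⟨m, hm⟩ := h1; obtain ⟨n, hn⟩ := h2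
  rcases le_total m n with h | h
  · left
    exact ⟨n - m, by rw [← hm, ← Function.iterate_add_apply, Nat.sub_add_cancel h, hn]⟩
  · right
    exact ⟨m - n, by rw [← hn, ← Function.iterate_add_apply, Nat.sub_add_cancel h, hm]⟩

lemma depth_lt' (root : V) (hroot : parent root = root)
    (hreach : ∀ u, ∃ n : ℕ, parent^[n] u = root) {u v : V}
    (hv : v ∈ ancSet parent u) :
    Nat.find (hreach v) < Nat.find (hreach u) := by
  obtain ⟨hne, n, hn⟩ := hv
  have hn0 : n ≠ 0 := by rintro rfl; exact hne hn.symm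
  have hdu_spec : parent^[Nat.find (hreach u)] u = root := Nat.find_spec (hreach u)
  have hune : u ≠ root := by
    rintro rfl
    exact hne (by rw [← hn, Function.iterate_fixed hroot])
  have hdu_pos : 0 < Nat.find (hreach u) := by
    rcases Nat.eq_zero_or_pos (Nat.find (hreach u)) with h | h
    · exact absurd (by rw [← hdu_spec, h, Function.iterate_zero_apply]) hune
    · exact h
  rcases le_or_gt n (Nat.find (hreach u)) with h | h
  · have hspec : parent^[Nat.find (hreach u) - n] v = root := by
      rw [← hn, ← Function.iterate_add_apply, Nat.sub_add_cancel h, hdu_spec]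
    have := Nat.find_min' (hreach v) hspec
    omega
  · have hvroot : v = root := by
      rw [← hn, ← Nat.sub_add_cancel h.le, Function.iterate_add_apply, hdu_spec,
        Function.iterate_fixed hroot]
    have : Nat.find (hreach v) ≤ 0 :=
      Nat.find_min' (hreach v) (by rw [Function.iterate_zero_apply, hvroot])
    omega

end Aux

section Cover

variable {V α : Type*} [Fintype V] [DecidableEq V]

/-- The set of nodes covered by subtrees of useful nodes of `R`. -/
noncomputable def coverSet (parent : V → V) (vars : V → Set α)
    (Zq : Set α) (R : Finset V) : Finset V :=
  Finset.univ.filter (fun x => ∃ u ∈ R, vars u ⊆ Zq ∧ x ∈ subtreeSet parent u)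

lemma coverSet_mono (parent : V → V) (vars : V → Set α) (Zq : Set α)
    {R R' : Finset V} (h : R ⊆ R') :
    coverSet parent vars Zq R ⊆ coverSet parent vars Zq R' := by
  intro x hx
  simp only [coverSet, Finset.mem_filter, Finset.mem_univ, true_and] at hx ⊢
  obtain ⟨u, hu, h1, h2⟩ := hx
  exact ⟨u, h hu, h1, h2⟩

lemma sum_useful_eq (root : V) (parent : V → V) (hroot : parent root = root)
    (hreach : ∀ u, ∃ n : ℕ, parent^[n] u = root)
    (vars : V → Set α) (Zq : Set α) (c : V → ℝ) (R : Finset V) :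
    ∑ u ∈ R, useful parent vars Zq u (↑R) * util parent c u
      = ∑ x ∈ coverSet parent vars Zq R, c x := by
  classical
  set P : V → Prop := fun u => vars u ⊆ Zq ∧ ∀ v ∈ ancSet parent u ∩ (↑R : Set V), ¬ vars v ⊆ Zq
    with hP
  have hL : ∑ u ∈ R, useful parent vars Zq u (↑R) * util parent c u
      = ∑ u ∈ R.filter P, util parent c u := by
    rw [Finset.sum_filter]
    refine Finset.sum_congr rfl fun u _ => ?_
    by_cases h : P u
    · simp [useful, hP, h]
    · simp [useful, hP, h]
  rw [hL]
  set A : V → Finset V := fun u => Finset.univ.filter (fun x => x ∈ subtreeSet parent u)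
    with hA
  have hdisj : ∀ u ∈ R.filter P, ∀ v ∈ R.filter P, u ≠ v → Disjoint (A u) (A v) := by
    intro u hu v hv huv
    rw [Finset.disjoint_left]
    intro x hxu hxv
    simp only [hA, Finset.mem_filter, Finset.mem_univ, true_and] at hxu hxv
    simp only [Finset.mem_filter, hP] at hu hv
    rcases subtree_total' hxu hxv with h | h
    · exact hu.2.2 v ⟨⟨huv.symm, h⟩, hv.1⟩ hv.2.1
    · exact hv.2.2 u ⟨⟨huv, h⟩, hu.1⟩ hu.2.1
  rw [show ∑ u ∈ R.filter P, util parent c u = ∑ u ∈ R.filter P, ∑ x ∈ A u, c x from rfl,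
    ← Finset.sum_biUnion hdisj]
  congr 1
  ext x
  simp only [Finset.mem_biUnion, hA, Finset.mem_filter, Finset.mem_univ, true_and,
    coverSet, hP]
  constructor
  · rintro ⟨u, ⟨huR, h1, _⟩, hx⟩
    exact ⟨u, huR, h1, hx⟩
  · rintro ⟨u, huR, h1, hx⟩
    set T : Finset V := R.filter (fun v => vars v ⊆ Zq ∧ x ∈ subtreeSet parent v) with hT
    have hTne : T.Nonempty := ⟨u, by simp [hT, huR, h1, hx]⟩
    obtain ⟨m, hmT, hmin⟩ := Finset.exists_min_image T (fun v => Nat.find (hreach v)) hTne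
    simp only [hT, Finset.mem_filter] at hmT
    refine ⟨m, ⟨hmT.1, hmT.2.1, ?_⟩, hmT.2.2⟩
    rintro v ⟨hvanc, hvR⟩ hvZ
    have hxv : x ∈ subtreeSet parent v := subtree_trans' hmT.2.2 ⟨hvanc.2.choose, hvanc.2.choose_spec⟩
    have hvT : v ∈ T := by
      simp only [hT, Finset.mem_filter]
      exact ⟨Finset.mem_coe.1 hvR, hvZ, hxv⟩
    have hlt := depth_lt' root hroot hreach hvanc
    have hle := hmin v hvT
    have e1 : ∀ (w : V) (i1 i2 : DecidablePred (fun n => parent^[n] w = root)),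
        @Nat.find _ i1 (hreach w) = @Nat.find _ i2 (hreach w) := by
      intro w i1 i2; congr!
    rw [e1 v _ (fun a => Classical.propDecidable _), e1 m _ (fun a => Classical.propDecidable _)] at hle
    exact absurd hle (not_le.2 hlt)

lemma sum_biUnion_le_nonneg {β : Type*} (s : Finset β) (t : β → Finset V)
    (f : V → ℝ) (hf : ∀ x, 0 ≤ f x) :
    ∑ x ∈ s.biUnion t, f x ≤ ∑ i ∈ s, ∑ x ∈ t i, f x := by
  classical
  induction s using Finset.induction_on with
  | empty => simp
  | insert a s hnot ih =>
    rw [Finset.biUnion_insert, Finset.sum_insert hnot]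
    calc ∑ x ∈ t a ∪ s.biUnion t, f x
        ≤ ∑ x ∈ t a, f x + ∑ x ∈ s.biUnion t, f x := by
          rw [← Finset.sum_union_inter]
          have : 0 ≤ ∑ x ∈ t a ∩ s.biUnion t, f x :=
            Finset.sum_nonneg fun x _ => hf x
          linarith
      _ ≤ ∑ x ∈ t a, f x + ∑ i ∈ s, ∑ x ∈ t i, f x := by linarith [ih]

lemma cover_submod (parent : V → V) (vars : V → Set α) (Zq : Set α)
    (c : V → ℝ) (hc : ∀ x, 0 ≤ c x) (R T : Finset V) :
    ∑ x ∈ coverSet parent vars Zq T, c x ≤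
      (∑ x ∈ coverSet parent vars Zq R, c x) +
        ∑ u ∈ T \ R, ((∑ x ∈ coverSet parent vars Zq (insert u R), c x) -
          ∑ x ∈ coverSet parent vars Zq R, c x) := by
  classical
  set C : Finset V → Finset V := coverSet parent vars Zq with hC
  have step1 : ∑ x ∈ C T, c x ≤ ∑ x ∈ C (R ∪ T), c x :=
    Finset.sum_le_sum_of_subset_of_nonneg
      (coverSet_mono parent vars Zq Finset.subset_union_right) (fun x _ _ => hc x)
  have hRsub : C R ⊆ C (R ∪ T) := coverSet_mono parent vars Zq Finset.subset_union_left
  have split : ∑ x ∈ C (R ∪ T), c x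
      = ∑ x ∈ C (R ∪ T) \ C R, c x + ∑ x ∈ C R, c x :=
    (Finset.sum_sdiff hRsub).symm
  have hsubset : C (R ∪ T) \ C R ⊆ (T \ R).biUnion (fun u => C (insert u R) \ C R) := by
    intro x hx
    rw [Finset.mem_sdiff] at hx
    obtain ⟨hx1, hx2⟩ := hx
    simp only [hC, coverSet, Finset.mem_filter, Finset.mem_univ, true_and] at hx1
    obtain ⟨u, hu, h1, h2⟩ := hx1
    have huR : u ∉ R := by
      intro huR
      refine hx2 ?_
      simp only [hC, coverSet, Finset.mem_filter, Finset.mem_univ, true_and]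
      exact ⟨u, huR, h1, h2⟩
    have huT : u ∈ T := by
      rcases Finset.mem_union.1 hu with h | h
      · exact absurd h huR
      · exact h
    refine Finset.mem_biUnion.2 ⟨u, Finset.mem_sdiff.2 ⟨huT, huR⟩, Finset.mem_sdiff.2 ⟨?_, hx2⟩⟩
    simp only [hC, coverSet, Finset.mem_filter, Finset.mem_univ, true_and]
    exact ⟨u, Finset.mem_insert_self u R, h1, h2⟩
  have step3 : ∑ x ∈ C (R ∪ T) \ C R, c x
      ≤ ∑ u ∈ T \ R, ∑ x ∈ C (insert u R) \ C R, c x := by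
    calc ∑ x ∈ C (R ∪ T) \ C R, c x
        ≤ ∑ x ∈ (T \ R).biUnion (fun u => C (insert u R) \ C R), c x :=
          Finset.sum_le_sum_of_subset_of_nonneg hsubset (fun x _ _ => hc x)
      _ ≤ _ := sum_biUnion_le_nonneg _ _ _ hc
  have step4 : ∀ u, ∑ x ∈ C (insert u R) \ C R, c x
      = (∑ x ∈ C (insert u R), c x) - ∑ x ∈ C R, c x := fun u =>
    Finset.sum_sdiff_eq_sub (coverSet_mono parent vars Zq (Finset.subset_insert u R))
  calc ∑ x ∈ C T, c x ≤ ∑ x ∈ C (R ∪ T), c x := step1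
    _ = ∑ x ∈ C (R ∪ T) \ C R, c x + ∑ x ∈ C R, c x := split
    _ ≤ (∑ u ∈ T \ R, ∑ x ∈ C (insert u R) \ C R, c x) + ∑ x ∈ C R, c x := by linarith
    _ = _ := by
        rw [add_comm]
        congr 1
        exact Finset.sum_congr rfl fun u _ => step4 u

end Cover

section BenefitLemmas

variable {V α Q : Type*} [Fintype V] [DecidableEq V] [Fintype Q]

lemma benefit_eq_cover (root : V) (parent : V → V) (hroot : parent root = root)
    (hreach : ∀ u, ∃ n : ℕ, parent^[n] u = root)
    (vars : V → Set α) (Z : Q → Set α) (Pr : Q → ℝ) (c : V → ℝ) (R : Finset V) :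
    benefit parent vars Z Pr c R
      = ∑ q : Q, Pr q * ∑ x ∈ coverSet parent vars (Z q) R, c x := by
  simp only [benefit, eInd, Finset.sum_mul]
  rw [Finset.sum_comm]
  refine Finset.sum_congr rfl fun q _ => ?_
  rw [← sum_useful_eq root parent hroot hreach vars (Z q) c R, Finset.mul_sum]
  exact Finset.sum_congr rfl fun u _ => by ring

lemma benefit_mono (root : V) (parent : V → V) (hroot : parent root = root)
    (hreach : ∀ u, ∃ n : ℕ, parent^[n] u = root)
    (vars : V → Set α) (Z : Q → Set α) (Pr : Q → ℝ) (hPr0 : ∀ q, 0 ≤ Pr q)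
    (c : V → ℝ) (hc : ∀ x, 0 ≤ c x) {R R' : Finset V} (h : R ⊆ R') :
    benefit parent vars Z Pr c R ≤ benefit parent vars Z Pr c R' := by
  rw [benefit_eq_cover root parent hroot hreach,
    benefit_eq_cover root parent hroot hreach]
  refine Finset.sum_le_sum fun q _ => ?_
  refine mul_le_mul_of_nonneg_left ?_ (hPr0 q)
  exact Finset.sum_le_sum_of_subset_of_nonneg
    (coverSet_mono parent vars (Z q) h) (fun x _ _ => hc x)

lemma benefit_submod (root : V) (parent : V → V) (hroot : parent root = root)
    (hreach : ∀ u, ∃ n : ℕ, parent^[n] u = root)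
    (vars : V → Set α) (Z : Q → Set α) (Pr : Q → ℝ) (hPr0 : ∀ q, 0 ≤ Pr q)
    (c : V → ℝ) (hc : ∀ x, 0 ≤ c x) (R T : Finset V) :
    benefit parent vars Z Pr c T ≤ benefit parent vars Z Pr c R +
      ∑ u ∈ T \ R, (benefit parent vars Z Pr c (insert u R) -
        benefit parent vars Z Pr c R) := by
  have hb : ∀ X : Finset V, benefit parent vars Z Pr c X
      = ∑ q : Q, Pr q * ∑ x ∈ coverSet parent vars (Z q) X, c x :=
    benefit_eq_cover root parent hroot hreach vars Z Pr c
  simp only [hb]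
  have key : ∀ q : Q, Pr q * ∑ x ∈ coverSet parent vars (Z q) T, c x
      ≤ Pr q * ∑ x ∈ coverSet parent vars (Z q) R, c x +
        ∑ u ∈ T \ R, (Pr q * ∑ x ∈ coverSet parent vars (Z q) (insert u R), c x -
          Pr q * ∑ x ∈ coverSet parent vars (Z q) R, c x) := by
    intro q
    have h1 := cover_submod parent vars (Z q) c hc R T
    refine (mul_le_mul_of_nonneg_left h1 (hPr0 q)).trans (le_of_eq ?_)
    rw [mul_add]
    congr 1
    rw [Finset.mul_sum]
    exact Finset.sum_congr rfl fun u _ => by ring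
  calc ∑ q : Q, Pr q * ∑ x ∈ coverSet parent vars (Z q) T, c x
      ≤ ∑ q : Q, (Pr q * ∑ x ∈ coverSet parent vars (Z q) R, c x +
        ∑ u ∈ T \ R, (Pr q * ∑ x ∈ coverSet parent vars (Z q) (insert u R), c x -
          Pr q * ∑ x ∈ coverSet parent vars (Z q) R, c x)) :=
        Finset.sum_le_sum fun q _ => key q
    _ = _ := by
        rw [Finset.sum_add_distrib]
        congr 1
        rw [Finset.sum_comm]
        exact Finset.sum_congr rfl fun u _ => by rw [Finset.sum_sub_distrib]

end BenefitLemmas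


/-- Greedy guarantee: the greedy sequence `R_0 = ∅`,
`R_{i+1} = R_i ∪ {u_i}` with `u_i ∉ R_i` maximizing the marginal benefit,
satisfies `B(R_k) ≥ (1 − 1/e) · max{B(R) : R ⊆ V, |R| ≤ k}`. -/
theorem greedy_approximation {V α Q : Type*} [Fintype V] [DecidableEq V] [Fintype Q]
    (root : V) (parent : V → V)
    (hroot : parent root = root)
    (hreach : ∀ u, ∃ n : ℕ, parent^[n] u = root)
    (vars : V → Set α)
    (hvars : ∀ u v : V, v ∈ ancSet parent u → vars u ⊆ vars v)
    (Z : Q → Set α) (Pr : Q → ℝ)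
    (hPr0 : ∀ q, 0 ≤ Pr q) (hPr1 : ∑ q : Q, Pr q = 1)
    (c : V → ℝ) (hc : ∀ x, 0 ≤ c x)
    (k : ℕ) (hk : 0 < k) (hkcard : k ≤ Fintype.card V)
    (Rseq : ℕ → Finset V) (hR0 : Rseq 0 = ∅)
    (hgreedy : ∀ i, i < k → ∃ u, u ∉ Rseq i ∧ Rseq (i + 1) = insert u (Rseq i) ∧
      ∀ w, w ∉ Rseq i →
        benefit parent vars Z Pr c (insert w (Rseq i)) -
            benefit parent vars Z Pr c (Rseq i) ≤
          benefit parent vars Z Pr c (insert u (Rseq i)) -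
            benefit parent vars Z Pr c (Rseq i)) :
    ∀ R : Finset V, R.card ≤ k →
      (1 - 1 / Real.exp 1) * benefit parent vars Z Pr c R ≤
        benefit parent vars Z Pr c (Rseq k) := by

  intro R hRcard
  have hmono : ∀ {A B : Finset V}, A ⊆ B →
      benefit parent vars Z Pr c A ≤ benefit parent vars Z Pr c B :=
    fun h => benefit_mono root parent hroot hreach vars Z Pr hPr0 c hc h
  have hf0 : benefit parent vars Z Pr c (∅ : Finset V) = 0 := by simp [benefit]
  have hfnn : 0 ≤ benefit parent vars Z Pr c R := hf0 ▸ hmono (Finset.empty_subset R)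
  have hkR : (0:ℝ) < (k:ℝ) := by exact_mod_cast hk
  -- key recursion
  have key : ∀ i, i < k →
      benefit parent vars Z Pr c R - benefit parent vars Z Pr c (Rseq (i+1))
        ≤ (1 - 1/(k:ℝ)) *
          (benefit parent vars Z Pr c R - benefit parent vars Z Pr c (Rseq i)) := by
    intro i hi
    obtain ⟨u, hu, hstep, hmax⟩ := hgreedy i hi
    set m := benefit parent vars Z Pr c (insert u (Rseq i)) -
      benefit parent vars Z Pr c (Rseq i) with hm
    have hm0 : 0 ≤ m := sub_nonneg.2 (hmono (Finset.subset_insert _ _))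
    have hbound : benefit parent vars Z Pr c R - benefit parent vars Z Pr c (Rseq i)
        ≤ (k:ℝ) * m := by
      have h1 := benefit_submod root parent hroot hreach vars Z Pr hPr0 c hc (Rseq i) R
      have h2 : ∑ w ∈ R \ Rseq i, (benefit parent vars Z Pr c (insert w (Rseq i)) -
          benefit parent vars Z Pr c (Rseq i)) ≤ ((R \ Rseq i).card : ℝ) * m := by
        have := Finset.sum_le_card_nsmul (R \ Rseq i)
          (fun w => benefit parent vars Z Pr c (insert w (Rseq i)) -
            benefit parent vars Z Pr c (Rseq i)) m
          (fun w hw => hmax w (Finset.mem_sdiff.1 hw).2)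
        simpa [nsmul_eq_mul] using this
      have h3 : ((R \ Rseq i).card : ℝ) ≤ (k:ℝ) := by
        have := (Finset.card_le_card (Finset.sdiff_subset (s := R) (t := Rseq i))).trans hRcard
        exact_mod_cast this
      nlinarith [h2, h3, h1, hm0]
    have hdiv : (1/(k:ℝ)) * (benefit parent vars Z Pr c R -
        benefit parent vars Z Pr c (Rseq i)) ≤ m := by
      rw [div_mul_eq_mul_div, one_mul, div_le_iff₀ hkR]
      linarith [hbound]
    have hmeq : benefit parent vars Z Pr c (insert u (Rseq i))
        = benefit parent vars Z Pr c (Rseq i) + m := by rw [hm]; ring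
    rw [hstep, hmeq]
    nlinarith [hdiv]
  -- iterate
  have hq0 : (0:ℝ) ≤ 1 - 1/(k:ℝ) := by
    have : 1/(k:ℝ) ≤ 1 := by
      rw [div_le_one hkR]
      exact_mod_cast hk
    linarith
  have iter : ∀ j, j ≤ k →
      benefit parent vars Z Pr c R - benefit parent vars Z Pr c (Rseq j)
        ≤ (1 - 1/(k:ℝ))^j * benefit parent vars Z Pr c R := by
    intro j
    induction j with
    | zero => intro _; simp [hR0, hf0]
    | succ j ih =>
      intro hj
      have hjk : j < k := Nat.lt_of_succ_le hj
      have h1 := key j hjk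
      have h2 := ih (Nat.le_of_lt hjk)
      calc benefit parent vars Z Pr c R - benefit parent vars Z Pr c (Rseq (j+1))
          ≤ (1 - 1/(k:ℝ)) * (benefit parent vars Z Pr c R -
            benefit parent vars Z Pr c (Rseq j)) := h1
        _ ≤ (1 - 1/(k:ℝ)) * ((1 - 1/(k:ℝ))^j * benefit parent vars Z Pr c R) :=
            mul_le_mul_of_nonneg_left h2 hq0
        _ = (1 - 1/(k:ℝ))^(j+1) * benefit parent vars Z Pr c R := by ring
  have hiter := iter k le_rfl
  -- (1 - 1/k)^k ≤ 1/e
  have hexp : (1 - 1/(k:ℝ))^k ≤ 1 / Real.exp 1 := by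
    have h1 : (1 - 1/(k:ℝ)) ≤ Real.exp (-(1/(k:ℝ))) := by
      have := Real.add_one_le_exp (-(1/(k:ℝ)))
      linarith
    have h2 : (1 - 1/(k:ℝ))^k ≤ (Real.exp (-(1/(k:ℝ))))^k :=
      pow_le_pow_left₀ hq0 h1 k
    have h3 : (Real.exp (-(1/(k:ℝ))))^k = Real.exp ((k:ℝ) * (-(1/(k:ℝ)))) := by
      rw [← Real.exp_nat_mul]
    have h4 : (k:ℝ) * (-(1/(k:ℝ))) = -1 := by
      field_simp
    rw [h3, h4, Real.exp_neg] at h2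
    simpa [one_div] using h2
  have hfin : (1 - 1/(k:ℝ))^k * benefit parent vars Z Pr c R
      ≤ (1 / Real.exp 1) * benefit parent vars Z Pr c R :=
    mul_le_mul_of_nonneg_right hexp hfnn
  linarith [hiter, hfin]
end
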